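/- Converse: suppose W(a,b,c,d,z) ∈ Hom(V[d−a]⊗V[c−d], V[c−b]⊗V[b−a]) satisfy the star-triangle relation and the unitarity Σ_g W(a,g,c,d,z) W(a,b,c,g,−z) = δ_{bd} Id. Then R(z,λ) := Σ_{a,b,c,d : a+c = λ/η} W(a,b,c,d,z) E[d−a] ⊗ E[c−d] is a generalized quantum R-matrix: it is weight-zero, unitary, and satisfies the modified Yang–Baxter equation. -/
import Mathlib


open Matrix Filter Topology
open scoped BigOperators

noncomputable section

/- The Cartan subalgebra `𝔥` is identified with `ℂ^m = Fin m → ℂ` via an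
orthonormal basis `(h_ν)`; a diagonalizable `𝔥`-module is a space `ℂ^ι`
together with a weight function `wt : ι → (Fin m → ℂ)`; `λ ∈ 𝔥` acts on the
basis vector `i` by the scalar `⟨wt i, λ⟩ = Σ_ν (wt i) ν * λ ν`. -/

variable {m : ℕ}

/-- pairing `⟨μ, X⟩` of a weight with an element of `𝔥`. -/
def pairH (μ X : Fin m → ℂ) : ℂ := ∑ ν, μ ν * X ν

section Emb

variable {α β γ : Type*} [Fintype α] [Fintype β] [Fintype γ]
variable [DecidableEq α] [DecidableEq β] [DecidableEq γ]

/-- `F(λ + c h^{(3)})` acting on factors 1,2 of a triple tensor product: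
`f(λ + c h^{(k)}) = Σ_μ P_μ^{(k)} f(λ + c μ)` via the weight projections. -/
def emb12sh (wt : γ → (Fin m → ℂ)) (c : ℂ)
    (F : (Fin m → ℂ) → Matrix (α × β) (α × β) ℂ) (lam : Fin m → ℂ) :
    Matrix (α × β × γ) (α × β × γ) ℂ :=
  fun p q => F (lam + c • wt p.2.2) (p.1, p.2.1) (q.1, q.2.1) *
    (if p.2.2 = q.2.2 then 1 else 0)

/-- `F(λ + c h^{(2)})` acting on factors 1,3. -/
def emb13sh (wt : β → (Fin m → ℂ)) (c : ℂ)
    (F : (Fin m → ℂ) → Matrix (α × γ) (α × γ) ℂ) (lam : Fin m → ℂ) :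
    Matrix (α × β × γ) (α × β × γ) ℂ :=
  fun p q => F (lam + c • wt p.2.1) (p.1, p.2.2) (q.1, q.2.2) *
    (if p.2.1 = q.2.1 then 1 else 0)

/-- `F(λ + c h^{(1)})` acting on factors 2,3. -/
def emb23sh (wt : α → (Fin m → ℂ)) (c : ℂ)
    (F : (Fin m → ℂ) → Matrix (β × γ) (β × γ) ℂ) (lam : Fin m → ℂ) :
    Matrix (α × β × γ) (α × β × γ) ℂ :=
  fun p q => F (lam + c • wt p.1) (p.2.1, p.2.2) (q.2.1, q.2.2) *
    (if p.1 = q.1 then 1 else 0)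

/-- plain (unshifted) embedding into factors 1,2. -/
def emb12p (M : Matrix (α × β) (α × β) ℂ) : Matrix (α × β × γ) (α × β × γ) ℂ :=
  fun p q => M (p.1, p.2.1) (q.1, q.2.1) * (if p.2.2 = q.2.2 then 1 else 0)

/-- plain embedding into factors 1,3. -/
def emb13p (M : Matrix (α × γ) (α × γ) ℂ) : Matrix (α × β × γ) (α × β × γ) ℂ :=
  fun p q => M (p.1, p.2.2) (q.1, q.2.2) * (if p.2.1 = q.2.1 then 1 else 0)

/-- plain embedding into factors 2,3. -/
def emb23p (M : Matrix (β × γ) (β × γ) ℂ) : Matrix (α × β × γ) (α × β × γ) ℂ :=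
  fun p q => M (p.2.1, p.2.2) (q.2.1, q.2.2) * (if p.1 = q.1 then 1 else 0)

/-- weight-zero condition on a matrix on a two-fold tensor product:
`[X^{(1)} + X^{(2)}, F] = 0` for all `X ∈ 𝔥`. -/
def WeightZero2 (wtA : α → (Fin m → ℂ)) (wtB : β → (Fin m → ℂ))
    (F : Matrix (α × β) (α × β) ℂ) : Prop :=
  ∀ X : Fin m → ℂ,
    Matrix.diagonal (fun p : α × β => pairH (wtA p.1) X + pairH (wtB p.2) X) * F =
    F * Matrix.diagonal (fun p : α × β => pairH (wtA p.1) X + pairH (wtB p.2) X)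

end Emb

section RMat

variable {ι : Type*} [Fintype ι] [DecidableEq ι]

/-- the flip `P` of `V ⊗ V`. -/
def flipP : Matrix (ι × ι) (ι × ι) ℂ := fun p q => if p.1 = q.2 ∧ p.2 = q.1 then 1 else 0

/-- the modified (dynamical) Yang–Baxter equation
`R^{(12)}(z₁₂,λ+ηh^{(3)}) R^{(13)}(z₁₃,λ−ηh^{(2)}) R^{(23)}(z₂₃,λ+ηh^{(1)}) =
 R^{(23)}(z₂₃,λ−ηh^{(1)}) R^{(13)}(z₁₃,λ+ηh^{(2)}) R^{(12)}(z₁₂,λ−ηh^{(3)})`. -/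
def MYBE (wt : ι → (Fin m → ℂ)) (η : ℂ)
    (R : ℂ → (Fin m → ℂ) → Matrix (ι × ι) (ι × ι) ℂ) : Prop :=
  ∀ z₁ z₂ z₃ lam,
    emb12sh wt η (R (z₁ - z₂)) lam * emb13sh wt (-η) (R (z₁ - z₃)) lam *
        emb23sh wt η (R (z₂ - z₃)) lam =
      emb23sh wt (-η) (R (z₂ - z₃)) lam * emb13sh wt η (R (z₁ - z₃)) lam *
        emb12sh wt (-η) (R (z₁ - z₂)) lam

/-- unitarity `R^{(12)}(z,λ) R^{(21)}(−z,λ) = Id`. -/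
def RUnitary (R : ℂ → (Fin m → ℂ) → Matrix (ι × ι) (ι × ι) ℂ) : Prop :=
  ∀ z lam, R z lam * (flipP * R (-z) lam * flipP) = 1

/-- a generalized quantum R-matrix: a weight-zero unitary solution of the
modified Yang–Baxter equation. -/
def IsGenR (wt : ι → (Fin m → ℂ)) (η : ℂ)
    (R : ℂ → (Fin m → ℂ) → Matrix (ι × ι) (ι × ι) ℂ) : Prop :=
  MYBE wt η R ∧ RUnitary R ∧ ∀ z lam, WeightZero2 wt wt (R z lam)

end RMat

section Rep

variable {ι κ : Type*} [Fintype ι] [DecidableEq ι] [Fintype κ] [DecidableEq κ]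

/-- the RLL relation defining representations of the elliptic quantum group
`A(R)`:
`R^{(12)}(z₁₂,λ+ηh^{(3)}) L^{(13)}(z₁,λ−ηh^{(2)}) L^{(23)}(z₂,λ+ηh^{(1)}) =
 L^{(23)}(z₂,λ−ηh^{(1)}) L^{(13)}(z₁,λ+ηh^{(2)}) R^{(12)}(z₁₂,λ−ηh^{(3)})`
in `End(V ⊗ V ⊗ W)`. -/
def RLL (wt : ι → (Fin m → ℂ)) (wtW : κ → (Fin m → ℂ)) (η : ℂ)
    (R : ℂ → (Fin m → ℂ) → Matrix (ι × ι) (ι × ι) ℂ)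
    (L : ℂ → (Fin m → ℂ) → Matrix (ι × κ) (ι × κ) ℂ) : Prop :=
  ∀ z₁ z₂ lam,
    emb12sh wtW η (R (z₁ - z₂)) lam * emb13sh wt (-η) (L z₁) lam *
        emb23sh wt η (L z₂) lam =
      emb23sh wt (-η) (L z₂) lam * emb13sh wt η (L z₁) lam *
        emb12sh wtW (-η) (R (z₁ - z₂)) lam

/-- a representation of `A(R)`: a weight-zero `L`-operator satisfying `RLL`. -/
def IsRep (wt : ι → (Fin m → ℂ)) (wtW : κ → (Fin m → ℂ)) (η : ℂ)
    (R : ℂ → (Fin m → ℂ) → Matrix (ι × ι) (ι × ι) ℂ)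
    (L : ℂ → (Fin m → ℂ) → Matrix (ι × κ) (ι × κ) ℂ) : Prop :=
  RLL wt wtW η R L ∧ ∀ z lam, WeightZero2 wt wtW (L z lam)

end Rep

section Face

variable {ι : Type*} [Fintype ι] [DecidableEq ι]

/-- the projection `E[μ] ⊗ E[ν]` onto `V[μ] ⊗ V[ν]` inside `V ⊗ V`. -/
def projK (wt : ι → (Fin m → ℂ)) (μ ν : Fin m → ℂ) :
    Matrix (ι × ι) (ι × ι) ℂ :=
  Matrix.diagonal (fun p =>
    (if wt p.1 = μ then 1 else 0) * (if wt p.2 = ν then 1 else 0))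

/-- the face (Boltzmann) weight
`W(a,b,c,d,z,λ) = (E[c−b]⊗E[b−a]) R(z, λ+ηa+ηc)|_{V[d−a]⊗V[c−d]}`. -/
def face (wt : ι → (Fin m → ℂ)) (η : ℂ)
    (R : ℂ → (Fin m → ℂ) → Matrix (ι × ι) (ι × ι) ℂ)
    (a b c d : Fin m → ℂ) (z : ℂ) (lam : Fin m → ℂ) :
    Matrix (ι × ι) (ι × ι) ℂ :=
  projK wt (c - b) (b - a) * R z (lam + η • a + η • c) * projK wt (d - a) (c - d)

/-- the face weight at `λ = 0`: `W(a,b,c,d,z) = W(a,b,c,d,z,0)`. -/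
def face0 (wt : ι → (Fin m → ℂ)) (η : ℂ)
    (R : ℂ → (Fin m → ℂ) → Matrix (ι × ι) (ι × ι) ℂ)
    (a b c d : Fin m → ℂ) (z : ℂ) : Matrix (ι × ι) (ι × ι) ℂ :=
  face wt η R a b c d z 0

end Face


section AuxLemmas

private lemma collapse3 {γ : Type*} [DecidableEq γ] {s : Finset γ} {x₁ x₂ : γ}
    (h₁ : x₁ ∈ s) (h₂ : x₂ ∈ s) (f : γ → γ → γ → ℂ) :
    (∑ μ₁ ∈ s, ∑ μ₂ ∈ s, ∑ μ₃ ∈ s,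
        f μ₁ μ₂ μ₃ * ((if x₁ = μ₁ then (1:ℂ) else 0) * (if x₂ = μ₂ then (1:ℂ) else 0)))
      = ∑ μ₃ ∈ s, f x₁ x₂ μ₃ := by
  rw [Finset.sum_eq_single_of_mem x₁ h₁ (fun b _ hb => Finset.sum_eq_zero fun c _ =>
    Finset.sum_eq_zero fun d _ => by rw [if_neg fun h => hb h.symm, zero_mul, mul_zero])]
  rw [Finset.sum_eq_single_of_mem x₂ h₂ (fun b _ hb => Finset.sum_eq_zero fun d _ => by
    rw [show (if x₂ = b then (1:ℂ) else 0) = 0 from if_neg fun h => hb h.symm,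
      mul_zero, mul_zero])]
  simp

private lemma mul3_apply {n : Type*} [Fintype n] (A B C : Matrix n n ℂ) (p s : n) :
    (A * B * C) p s = ∑ q, ∑ r, A p q * B q r * C r s := by
  rw [Matrix.mul_apply]
  trans (∑ r, ∑ q, A p q * B q r * C r s)
  · exact Finset.sum_congr rfl fun r _ => by rw [Matrix.mul_apply, Finset.sum_mul]
  · exact Finset.sum_comm

private lemma flip_mul_apply {ι : Type*} [Fintype ι] [DecidableEq ι]
    (M : Matrix (ι × ι) (ι × ι) ℂ) (p q : ι × ι) :
    (flipP (ι := ι) * M) p q = M (p.2, p.1) q := by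
  rw [Matrix.mul_apply]
  rw [Finset.sum_eq_single (p.2, p.1) (fun k _ hk => by
      simp only [flipP]
      rw [if_neg, zero_mul]
      rintro ⟨h1, h2⟩
      exact hk (Prod.ext h2.symm h1.symm))
    (fun h => absurd (Finset.mem_univ _) h)]
  simp [flipP]

private lemma mul_flip_apply {ι : Type*} [Fintype ι] [DecidableEq ι]
    (M : Matrix (ι × ι) (ι × ι) ℂ) (p q : ι × ι) :
    (M * flipP (ι := ι)) p q = M p (q.2, q.1) := by
  rw [Matrix.mul_apply]
  rw [Finset.sum_eq_single (q.2, q.1) (fun k _ hk => by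
      simp only [flipP]
      rw [if_neg, mul_zero]
      rintro ⟨h1, h2⟩
      exact hk (Prod.ext h1 h2))
    (fun h => absurd (Finset.mem_univ _) h)]
  simp [flipP]

private lemma flip_conj {ι : Type*} [Fintype ι] [DecidableEq ι]
    (M : Matrix (ι × ι) (ι × ι) ℂ) (p q : ι × ι) :
    (flipP (ι := ι) * M * flipP (ι := ι)) p q = M (p.2, p.1) (q.2, q.1) := by
  rw [mul_flip_apply, flip_mul_apply]

private lemma unit_entry_aux {ι : Type*} [Fintype ι] [DecidableEq ι]
    (A B : Matrix (ι × ι) (ι × ι) ℂ) (p r : ι × ι) :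
    (flipP (ι := ι) * A * flipP (ι := ι) * B) p r = ∑ q, A (p.2, p.1) (q.2, q.1) * B q r := by
  rw [Matrix.mul_apply]
  exact Finset.sum_congr rfl fun q _ => by rw [flip_conj]

private lemma W4congr {m : ℕ} {ι : Type*} [Fintype ι] [DecidableEq ι]
    (W : (Fin m → ℂ) → (Fin m → ℂ) → (Fin m → ℂ) → (Fin m → ℂ) → ℂ →
      Matrix (ι × ι) (ι × ι) ℂ)
    {a a' b b' c c' d d' : Fin m → ℂ} (z : ℂ) (p q : ι × ι)
    (ha : a = a') (hb : b = b') (hc : c = c') (hd : d = d') :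
    W a b c d z p q = W a' b' c' d' z p q := by rw [ha, hb, hc, hd]

end AuxLemmas

/-- converse: from a solution `W(a,b,c,d,z)` of the
star-triangle relation satisfying the unitarity
`Σ_g W(a,g,c,d,z) W(a,b,c,g,−z) = δ_{bd}`, the formula
`R(z,λ) = Σ_{a,b,c,d : a+c = λ/η} W(a,b,c,d,z) E(d−a) ⊗ E(c−d)`
defines a generalized quantum R-matrix: it is weight zero, unitary, and
satisfies the modified Yang–Baxter equation. -/
theorem genR_of_star_triangle
    {ι : Type*} [Fintype ι] [DecidableEq ι]
    (wt : ι → (Fin m → ℂ)) (η : ℂ) (hη : η ≠ 0)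
    (W : (Fin m → ℂ) → (Fin m → ℂ) → (Fin m → ℂ) → (Fin m → ℂ) → ℂ →
      Matrix (ι × ι) (ι × ι) ℂ)
    -- `W(a,b,c,d,z) ∈ Hom(V[d−a]⊗V[c−d], V[c−b]⊗V[b−a])`:
    (hsupp : ∀ a b c d z, W a b c d z =
      projK wt (c - b) (b - a) * W a b c d z * projK wt (d - a) (c - d))
    -- the star-triangle relation on `V[f−a]⊗V[e−f]⊗V[d−e]`:
    (hSTR : ∀ (a b c d e f : Fin m → ℂ) (z₁ z₂ z₃ : ℂ),
      (∑ g ∈ (Finset.univ.image fun i => b + wt i) ∪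
          (Finset.univ.image fun i => a + wt i),
          emb12p (W b c d g (z₁ - z₂)) * emb13p (W a b g f (z₁ - z₃)) *
            emb23p (W f g d e (z₂ - z₃))) *
        Matrix.diagonal (fun p : ι × ι × ι =>
          ((if wt p.1 = f - a then 1 else 0) *
            (if wt p.2.1 = e - f then 1 else 0) *
            (if wt p.2.2 = d - e then 1 else 0) : ℂ)) =
      (∑ g ∈ (Finset.univ.image fun i => b + wt i) ∪
          (Finset.univ.image fun i => a + wt i),
          emb23p (W a b c g (z₂ - z₃)) * emb13p (W g c d e (z₁ - z₃)) *
            emb12p (W a g e f (z₁ - z₂))) *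
        Matrix.diagonal (fun p : ι × ι × ι =>
          ((if wt p.1 = f - a then 1 else 0) *
            (if wt p.2.1 = e - f then 1 else 0) *
            (if wt p.2.2 = d - e then 1 else 0) : ℂ)))
    -- unitarity `Σ_g W(a,g,c,d,z)W(a,b,c,g,−z) = δ_{bd}`:
    (hunit : ∀ (a b c d : Fin m → ℂ) (z : ℂ),
      ∑ g ∈ Finset.univ.image (fun i => a + wt i),
          (flipP * W a b c g (-z) * flipP) * W a g c d z =
        if b = d then projK wt (d - a) (c - d) else 0) :
    IsGenR wt η (fun z lam =>
      ∑ μ₁ ∈ Finset.univ.image wt, ∑ μ₂ ∈ Finset.univ.image wt,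
        ∑ μ₃ ∈ Finset.univ.image wt,
          W ((2:ℂ)⁻¹ • (η⁻¹ • lam - μ₁ - μ₂))
            (((2:ℂ)⁻¹ • (η⁻¹ • lam - μ₁ - μ₂)) + μ₁ + μ₂ - μ₃)
            (((2:ℂ)⁻¹ • (η⁻¹ • lam - μ₁ - μ₂)) + μ₁ + μ₂)
            (((2:ℂ)⁻¹ • (η⁻¹ • lam - μ₁ - μ₂)) + μ₁) z *
            projK wt μ₁ μ₂) := by
  classical
  set Rm : ℂ → (Fin m → ℂ) → Matrix (ι × ι) (ι × ι) ℂ := fun z lam =>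
      ∑ μ₁ ∈ Finset.univ.image wt, ∑ μ₂ ∈ Finset.univ.image wt,
        ∑ μ₃ ∈ Finset.univ.image wt,
          W ((2:ℂ)⁻¹ • (η⁻¹ • lam - μ₁ - μ₂))
            (((2:ℂ)⁻¹ • (η⁻¹ • lam - μ₁ - μ₂)) + μ₁ + μ₂ - μ₃)
            (((2:ℂ)⁻¹ • (η⁻¹ • lam - μ₁ - μ₂)) + μ₁ + μ₂)
            (((2:ℂ)⁻¹ • (η⁻¹ • lam - μ₁ - μ₂)) + μ₁) z *
            projK wt μ₁ μ₂ with hRm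
  have Wz : ∀ (a b c d : Fin m → ℂ) (z : ℂ) (p q : ι × ι),
      ¬(wt p.1 = c - b ∧ wt p.2 = b - a ∧ wt q.1 = d - a ∧ wt q.2 = c - d) →
      W a b c d z p q = 0 := by
    intro a b c d z p q hcon
    have h := Matrix.ext_iff.mpr (hsupp a b c d z) p q
    simp only [projK, Matrix.mul_diagonal, Matrix.diagonal_mul] at h
    by_cases h1 : wt p.1 = c - b
    · by_cases h2 : wt p.2 = b - a
      · by_cases h3 : wt q.1 = d - a
        · by_cases h4 : wt q.2 = c - d
          · exact absurd ⟨h1, h2, h3, h4⟩ hcon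
          · rw [h, if_neg h4]; ring
        · rw [h, if_neg h3]; ring
      · rw [h, if_neg h2]; ring
    · rw [h, if_neg h1]; ring
  have Wcond : ∀ (a b c d : Fin m → ℂ) (z : ℂ) (p q : ι × ι), W a b c d z p q ≠ 0 →
      wt p.1 = c - b ∧ wt p.2 = b - a ∧ wt q.1 = d - a ∧ wt q.2 = c - d := by
    intro a b c d z p q hne
    by_contra hcon
    exact hne (Wz _ _ _ _ _ _ _ hcon)
  have Rent : ∀ (z : ℂ) (lam : Fin m → ℂ) (p q : ι × ι),
      Rm z lam p q =
        W ((2:ℂ)⁻¹ • (η⁻¹ • lam - wt q.1 - wt q.2))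
          ((2:ℂ)⁻¹ • (η⁻¹ • lam - wt q.1 - wt q.2) + wt q.1 + wt q.2 - wt p.1)
          ((2:ℂ)⁻¹ • (η⁻¹ • lam - wt q.1 - wt q.2) + wt q.1 + wt q.2)
          ((2:ℂ)⁻¹ • (η⁻¹ • lam - wt q.1 - wt q.2) + wt q.1) z p q := by
    intro z lam p q
    rw [hRm]
    simp only [Finset.sum_apply, Matrix.sum_apply, projK, Matrix.mul_diagonal]
    rw [collapse3 (Finset.mem_image_of_mem wt (Finset.mem_univ q.1))
        (Finset.mem_image_of_mem wt (Finset.mem_univ q.2))]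
    apply Finset.sum_eq_single_of_mem (wt p.1)
        (Finset.mem_image_of_mem wt (Finset.mem_univ p.1))
    intro μ₃ _ hne
    apply Wz
    rintro ⟨hx, -, -, -⟩
    exact hne (by rw [hx]; module)
  have hcan : ∀ (v μ : Fin m → ℂ), η⁻¹ • (v + η • μ) = η⁻¹ • v + μ := by
    intro v μ
    rw [smul_add, smul_smul, inv_mul_cancel₀ hη, one_smul]
  have hcan' : ∀ (v μ : Fin m → ℂ), η⁻¹ • (v + (-η) • μ) = η⁻¹ • v - μ := by
    intro v μ
    rw [smul_add, smul_smul, show η⁻¹ * (-η) = -1 by field_simp]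
    module
  have pairadd : ∀ (μ ν X : Fin m → ℂ), pairH μ X + pairH ν X = pairH (μ + ν) X := by
    intro μ ν X
    simp [pairH, add_mul, Finset.sum_add_distrib]
  refine ⟨?_, ?_, ?_⟩
  · -- MYBE
    intro z₁ z₂ z₃ lam
    ext p s
    set aa := (2:ℂ)⁻¹ • (η⁻¹ • lam - wt s.1 - wt s.2.1 - wt s.2.2) with haa
    set ff := aa + wt s.1 with hff
    set ee := aa + wt s.1 + wt s.2.1 with hee
    set dd := aa + wt s.1 + wt s.2.1 + wt s.2.2 with hdd
    set cc := aa + wt s.1 + wt s.2.1 + wt s.2.2 - wt p.1 with hcc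
    set bb := aa + wt s.1 + wt s.2.1 + wt s.2.2 - wt p.1 - wt p.2.1 with hbb
    have key := Matrix.ext_iff.mpr (hSTR aa bb cc dd ee ff z₁ z₂ z₃) p s
    refine (Eq.trans ?_ key).trans ?_
    · -- LHS
      simp only [mul3_apply, Matrix.mul_diagonal, Finset.sum_apply, Matrix.sum_apply,
        emb12sh, emb13sh, emb23sh, emb12p, emb13p, emb23p]
      rw [if_pos (show wt s.1 = ff - aa from by rw [hff]; module),
          if_pos (show wt s.2.1 = ee - ff from by rw [hee, hff]; module),
          if_pos (show wt s.2.2 = dd - ee from by rw [hdd, hee]; module)]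
      simp only [mul_one, one_mul]
      conv_rhs => rw [Finset.sum_comm]
      refine Finset.sum_congr rfl fun q _ => ?_
      conv_rhs => rw [Finset.sum_comm]
      refine Finset.sum_congr rfl fun r _ => ?_
      by_cases h3 : p.2.2 = q.2.2
      case neg => simp [h3]
      by_cases h2 : q.2.1 = r.2.1
      case neg => simp [h2]
      by_cases h1 : r.1 = s.1
      case neg => simp [h1]
      simp only [if_pos h3, if_pos h2, if_pos h1, mul_one]
      simp only [Rent]
      try dsimp only
      simp only [hcan, hcan']
      by_cases hC1 : wt p.2.1 = wt q.1 + wt q.2.1 - wt p.1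
      case neg =>
        trans (0:ℂ)
        · apply mul_eq_zero_of_left
          apply mul_eq_zero_of_left
          apply Wz
          rintro ⟨-, hx, -, -⟩
          dsimp only at hx
          exact hC1 (by rw [hx]; module)
        · refine (Finset.sum_eq_zero fun g _ => ?_).symm
          apply mul_eq_zero_of_left
          apply mul_eq_zero_of_left
          apply Wz
          rintro ⟨-, -, hx, hy⟩
          dsimp only at hx hy
          exact hC1 (by rw [hx, hy, hbb, hdd]; module)
      by_cases hC2 : wt q.2.2 = wt r.1 + wt r.2.2 - wt q.1
      case neg =>
        trans (0:ℂ)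
        · apply mul_eq_zero_of_left
          apply mul_eq_zero_of_right
          apply Wz
          rintro ⟨-, hx, -, -⟩
          dsimp only at hx
          exact hC2 (by rw [hx]; module)
        · refine (Finset.sum_eq_zero fun g _ => ?_).symm
          by_cases hgg : wt q.1 = g - bb
          · apply mul_eq_zero_of_left
            apply mul_eq_zero_of_right
            apply Wz
            rintro ⟨-, hx, hy, hz⟩
            dsimp only at hx hy hz
            exact hC2 (by rw [hx, hy, hz, hgg]; module)
          · apply mul_eq_zero_of_left
            apply mul_eq_zero_of_left
            apply Wz
            rintro ⟨-, -, hx, -⟩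
            dsimp only at hx
            exact hgg hx
      by_cases hC3 : wt r.2.2 = wt s.2.1 + wt s.2.2 - wt r.2.1
      case neg =>
        trans (0:ℂ)
        · apply mul_eq_zero_of_right
          apply Wz
          rintro ⟨-, hx, -, -⟩
          dsimp only at hx
          exact hC3 (by rw [hx]; module)
        · refine (Finset.sum_eq_zero fun g _ => ?_).symm
          apply mul_eq_zero_of_right
          apply Wz
          rintro ⟨hx, hy, -, -⟩
          dsimp only at hx hy
          exact hC3 (by rw [hy, hx, hdd, hff]; module)
      trans (W bb cc dd (bb + wt q.1) (z₁ - z₂) (p.1, p.2.1) (q.1, q.2.1) *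
             W aa bb (bb + wt q.1) ff (z₁ - z₃) (q.1, q.2.2) (r.1, r.2.2) *
             W ff (bb + wt q.1) dd ee (z₂ - z₃) (r.2.1, r.2.2) (s.2.1, s.2.2))
      · refine congrArg₂ (· * ·) (congrArg₂ (· * ·)
          (W4congr W _ _ _ ?_ ?_ ?_ ?_) (W4congr W _ _ _ ?_ ?_ ?_ ?_))
          (W4congr W _ _ _ ?_ ?_ ?_ ?_)
        all_goals try simp only [haa, hbb, hcc, hdd, hee, hff, h1, h3, ← h2, hC1, hC2, hC3]
        all_goals module
      · symm
        apply Finset.sum_eq_single_of_mem (bb + wt q.1)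
            (Finset.mem_union_left _
              (Finset.mem_image_of_mem (fun i => bb + wt i) (Finset.mem_univ q.1)))
        intro g _ hg
        apply mul_eq_zero_of_left
        apply mul_eq_zero_of_left
        apply Wz
        rintro ⟨-, -, hx, -⟩
        dsimp only at hx
        exact hg (by rw [hx]; abel)
    · -- RHS
      symm
      simp only [mul3_apply, Matrix.mul_diagonal, Finset.sum_apply, Matrix.sum_apply,
        emb12sh, emb13sh, emb23sh, emb12p, emb13p, emb23p]
      rw [if_pos (show wt s.1 = ff - aa from by rw [hff]; module),
          if_pos (show wt s.2.1 = ee - ff from by rw [hee, hff]; module),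
          if_pos (show wt s.2.2 = dd - ee from by rw [hdd, hee]; module)]
      simp only [mul_one, one_mul]
      conv_rhs => rw [Finset.sum_comm]
      refine Finset.sum_congr rfl fun q _ => ?_
      conv_rhs => rw [Finset.sum_comm]
      refine Finset.sum_congr rfl fun r _ => ?_
      by_cases h1 : p.1 = q.1
      case neg => simp [h1]
      by_cases h2 : q.2.1 = r.2.1
      case neg => simp [h2]
      by_cases h3 : r.2.2 = s.2.2
      case neg => simp [h3]
      simp only [if_pos h3, if_pos h2, if_pos h1, mul_one]
      simp only [Rent]
      try dsimp only
      simp only [hcan, hcan']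
      by_cases hD1 : wt p.2.2 = wt q.2.1 + wt q.2.2 - wt p.2.1
      case neg =>
        trans (0:ℂ)
        · apply mul_eq_zero_of_left
          apply mul_eq_zero_of_left
          apply Wz
          rintro ⟨-, hx, -, -⟩
          dsimp only at hx
          exact hD1 (by rw [hx]; module)
        · refine (Finset.sum_eq_zero fun g _ => ?_).symm
          apply mul_eq_zero_of_left
          apply mul_eq_zero_of_left
          apply Wz
          rintro ⟨-, hx, hy, hz⟩
          dsimp only at hx hy hz
          exact hD1 (by rw [hx, hy, hz, hbb, hcc]; module)
      by_cases hD2 : wt q.2.2 = wt r.1 + wt r.2.2 - wt q.1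
      case neg =>
        trans (0:ℂ)
        · apply mul_eq_zero_of_left
          apply mul_eq_zero_of_right
          apply Wz
          rintro ⟨-, hx, -, -⟩
          dsimp only at hx
          exact hD2 (by rw [hx]; module)
        · refine (Finset.sum_eq_zero fun g _ => ?_).symm
          apply mul_eq_zero_of_left
          apply mul_eq_zero_of_right
          apply Wz
          rintro ⟨hx₁, hx₂, hx₃, hx₄⟩
          dsimp only at hx₁ hx₂ hx₃ hx₄
          exact hD2 (by rw [hx₂, hx₃, hx₄, hx₁]; module)
      by_cases hD3 : wt r.2.1 = wt s.1 + wt s.2.1 - wt r.1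
      case neg =>
        trans (0:ℂ)
        · apply mul_eq_zero_of_right
          apply Wz
          rintro ⟨-, hx, -, -⟩
          dsimp only at hx
          exact hD3 (by rw [hx]; module)
        · refine (Finset.sum_eq_zero fun g _ => ?_).symm
          apply mul_eq_zero_of_right
          apply Wz
          rintro ⟨hx, hy, -, -⟩
          dsimp only at hx hy
          exact hD3 (by rw [hy, hx, hee]; module)
      have hD3' : wt q.2.1 = wt s.1 + wt s.2.1 - wt r.1 := by rw [h2]; exact hD3
      trans (W aa bb cc (aa + wt q.2.1) (z₂ - z₃) (p.2.1, p.2.2) (q.2.1, q.2.2) *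
             W (aa + wt q.2.1) cc dd ee (z₁ - z₃) (q.1, q.2.2) (r.1, r.2.2) *
             W aa (aa + wt q.2.1) ee ff (z₁ - z₂) (r.1, r.2.1) (s.1, s.2.1))
      · refine congrArg₂ (· * ·) (congrArg₂ (· * ·)
          (W4congr W _ _ _ ?_ ?_ ?_ ?_) (W4congr W _ _ _ ?_ ?_ ?_ ?_))
          (W4congr W _ _ _ ?_ ?_ ?_ ?_)
        all_goals try simp only [haa, hbb, hcc, hdd, hee, hff, h1, h3, ← h2, hD1, hD2, hD3']
        all_goals module
      · symm
        apply Finset.sum_eq_single_of_mem (aa + wt q.2.1)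
            (Finset.mem_union_right _
              (Finset.mem_image_of_mem (fun i => aa + wt i) (Finset.mem_univ q.2.1)))
        intro g _ hg
        apply mul_eq_zero_of_left
        apply mul_eq_zero_of_left
        apply Wz
        rintro ⟨-, -, hx, -⟩
        dsimp only at hx
        exact hg (by rw [hx]; abel)
  · -- RUnitary
    intro z lam
    rw [mul_eq_one_comm]
    ext p r
    set aa := (2:ℂ)⁻¹ • (η⁻¹ • lam - wt r.1 - wt r.2) with haa
    set cc := aa + wt r.1 + wt r.2 with hcc
    set dd := aa + wt r.1 with hdd
    set bb := aa + wt r.1 + wt r.2 - wt p.2 with hbb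
    have hu := Matrix.ext_iff.mpr (hunit aa bb cc dd z) p r
    simp only [Finset.sum_apply, Matrix.sum_apply, unit_entry_aux] at hu
    rw [Finset.sum_comm] at hu
    rw [Matrix.mul_apply]
    simp only [flip_conj]
    refine Eq.trans ?_ (Eq.trans hu ?_)
    · refine Finset.sum_congr rfl fun q _ => ?_
      by_cases hq : wt q.2 = wt r.1 + wt r.2 - wt q.1
      · rw [Rent, Rent]
        trans (W aa bb cc (aa + wt q.2) (-z) (p.2, p.1) (q.2, q.1) *
               W aa (aa + wt q.2) cc dd z q r)
        · refine congrArg₂ (· * ·)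
            (W4congr W _ _ _ ?_ ?_ ?_ ?_) (W4congr W _ _ _ ?_ ?_ ?_ ?_)
          all_goals try dsimp only
          all_goals try simp only [haa, hbb, hcc, hdd, hq]
          all_goals module
        · symm
          apply Finset.sum_eq_single_of_mem (aa + wt q.2)
              (Finset.mem_image_of_mem (fun i => aa + wt i) (Finset.mem_univ q.2))
          intro g _ hg
          apply mul_eq_zero_of_right
          apply Wz
          rintro ⟨-, hx, -, -⟩
          exact hg (by rw [hx]; abel)
      · rw [Rent, Rent]
        trans (0:ℂ)
        · apply mul_eq_zero_of_right
          apply Wz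
          rintro ⟨-, hx, -, -⟩
          exact hq (by rw [hx]; module)
        · refine (Finset.sum_eq_zero fun g _ => ?_).symm
          apply mul_eq_zero_of_right
          apply Wz
          rintro ⟨hx₁, hx₂, hx₃, hx₄⟩
          exact hq (by rw [hx₂, hx₁, hx₃, hx₄]; module)
    · by_cases hpr : p = r
      · rw [if_pos (show bb = dd from by rw [hbb, hdd, hpr]; module)]
        rw [hpr, Matrix.one_apply_eq]
        simp only [projK]
        rw [Matrix.diagonal_apply_eq]
        rw [if_pos (show wt r.1 = dd - aa from by rw [hdd]; module),
            if_pos (show wt r.2 = cc - dd from by rw [hcc, hdd]; module)]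
        norm_num
      · rw [Matrix.one_apply_ne hpr]
        by_cases hbd : bb = dd
        · rw [if_pos hbd]
          simp only [projK]
          rw [Matrix.diagonal_apply_ne _ hpr]
        · rw [if_neg hbd, Matrix.zero_apply]
  · -- weight zero
    intro z lam X
    ext p q
    simp only [Matrix.diagonal_mul, Matrix.mul_diagonal]
    by_cases h0 : Rm z lam p q = 0
    · rw [h0]; ring
    · rw [Rent] at h0
      obtain ⟨-, hx, -, -⟩ := Wcond _ _ _ _ _ _ _ h0
      have key : pairH (wt p.1) X + pairH (wt p.2) X
          = pairH (wt q.1) X + pairH (wt q.2) X := by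
        rw [pairadd, pairadd]
        congr 1
        rw [hx]
        module
      rw [key]
      ring
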